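/- arXiv:2410.13688 — 2 statements merged into one kernel-verified Lean document; each statement's English description precedes it below -/
import Mathlib

section
/- Let m ≥ 1, M ≥ 0, and let C₀,…,C_{M−1} ∈ ℝ^{m×m} be matrices with spectral norm ‖C_k‖ ≤ 1 for every k. Let à be the (M+1)m × (M+1)m block matrix with identity m×m diagonal blocks, with block (k+1,k) equal to −C_k for k = 0,…,M−1, and zeros elsewhere. Then à is invertible and its condition number κ = ‖Ã‖·‖Ã⁻¹‖ (spectral norms) satisfies κ ≤ 3(M+1). -/
/-- The spectral (l₂ operator) norm of a real matrix. -/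
noncomputable def specNorm {ι κ : Type*} [Fintype ι] [Fintype κ] [DecidableEq κ]
    (M : Matrix ι κ ℝ) : ℝ :=
  ‖LinearMap.toContinuousLinearMap (Matrix.toEuclideanLin M)‖

/-- The forward-Euler system matrix: block lower bidiagonal, of block size
`(M+1) × (M+1)` with `m × m` blocks, identity blocks on the diagonal and block
`(k+1, k)` equal to `−C_k`. -/
noncomputable def eulerBlockMatrix (m M : ℕ) (C : ℕ → Matrix (Fin m) (Fin m) ℝ) :
    Matrix (Fin (M + 1) × Fin m) (Fin (M + 1) × Fin m) ℝ :=
  Matrix.of fun p q =>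
    if (p.1 : ℕ) = (q.1 : ℕ) then (if p.2 = q.2 then 1 else 0)
    else if (p.1 : ℕ) = (q.1 : ℕ) + 1 then -(C (q.1 : ℕ) p.2 q.2)
    else 0

open scoped Matrix.Norms.L2Operator
open scoped Matrix

noncomputable def shiftN (m M : ℕ) (C : ℕ → Matrix (Fin m) (Fin m) ℝ) :
    Matrix (Fin (M + 1) × Fin m) (Fin (M + 1) × Fin m) ℝ :=
  Matrix.of fun p q => if (p.1 : ℕ) = (q.1 : ℕ) + 1 then C (q.1 : ℕ) p.2 q.2 else 0

lemma euler_eq_one_sub (m M : ℕ) (C : ℕ → Matrix (Fin m) (Fin m) ℝ) :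
    eulerBlockMatrix m M C = 1 - shiftN m M C := by
  ext p q
  simp only [eulerBlockMatrix, shiftN, Matrix.of_apply, Matrix.sub_apply, Matrix.one_apply]
  by_cases h1 : (p.1 : ℕ) = (q.1 : ℕ)
  · have h2 : ¬ (p.1 : ℕ) = (q.1 : ℕ) + 1 := by omega
    have h3 : p.1 = q.1 := Fin.ext h1
    by_cases h4 : p.2 = q.2
    · have : p = q := Prod.ext h3 h4
      simp [h1, h2, h4, this]
    · have : p ≠ q := fun h => h4 (congrArg Prod.snd h)
      simp [h1, h2, h4, this]
  · have h3 : p ≠ q := fun h => h1 (by rw [h])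
    by_cases h2 : (p.1 : ℕ) = (q.1 : ℕ) + 1 <;> simp [h1, h2, h3, sub_eq_neg_self]

lemma shiftN_pow_eq_zero (m M : ℕ) (C : ℕ → Matrix (Fin m) (Fin m) ℝ) :
    ∀ (j : ℕ) (p q : Fin (M + 1) × Fin m), (p.1 : ℕ) < (q.1 : ℕ) + j →
      (shiftN m M C ^ j) p q = 0 := by
  intro j
  induction j with
  | zero =>
    intro p q h
    have : p ≠ q := by
      intro hpq; subst hpq; omega
    simp [Matrix.one_apply, this]
  | succ j ih =>
    intro p q h
    rw [pow_succ', Matrix.mul_apply]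
    refine Finset.sum_eq_zero fun r _ => ?_
    by_cases hr : (p.1 : ℕ) = (r.1 : ℕ) + 1
    · rw [ih r q (by omega), mul_zero]
    · simp [shiftN, hr]

lemma shiftN_nilpotent (m M : ℕ) (C : ℕ → Matrix (Fin m) (Fin m) ℝ) :
    shiftN m M C ^ (M + 1) = 0 := by
  ext p q
  exact shiftN_pow_eq_zero m M C (M + 1) p q (by omega)

lemma toEuclideanLin_norm_le {n : Type*} [Fintype n] [DecidableEq n] (A : Matrix n n ℝ)
    (v : EuclideanSpace ℝ n) : ‖Matrix.toEuclideanLin A v‖ ≤ specNorm A * ‖v‖ :=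
  (LinearMap.toContinuousLinearMap (Matrix.toEuclideanLin A)).le_opNorm v

lemma shiftN_norm_le (m M : ℕ) (C : ℕ → Matrix (Fin m) (Fin m) ℝ)
    (hC : ∀ k < M, specNorm (C k) ≤ 1) : ‖shiftN m M C‖ ≤ 1 := by
  rw [Matrix.l2_opNorm_def]
  refine ContinuousLinearMap.opNorm_le_bound _ zero_le_one fun x => ?_
  rw [one_mul]
  simp only [LinearEquiv.trans_apply, LinearMap.coe_toContinuousLinearMap']
  rw [Matrix.toEuclideanLin_apply]
  set y : (Fin (M + 1) × Fin m) → ℝ :=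
    shiftN m M C *ᵥ (WithLp.equiv 2 _) x with hy
  rw [EuclideanSpace.norm_eq, EuclideanSpace.norm_eq]
  refine Real.sqrt_le_sqrt ?_
  have happ : ∀ p, ((WithLp.equiv 2 ((Fin (M+1) × Fin m) → ℝ)).symm y) p = y p := fun p => rfl
  simp only [happ]
  -- block structure of y
  have hy0 : ∀ s : Fin m, y (0, s) = 0 := by
    intro s
    rw [hy]
    apply Finset.sum_eq_zero
    intro r _
    have : ((0 : Fin (M+1)) : ℕ) ≠ (r.1 : ℕ) + 1 := by
      simp only [Fin.val_zero]; omega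
    simp [shiftN, this]
  have hysucc : ∀ (i : Fin M) (s : Fin m),
      y (i.succ, s) = (C (i : ℕ) *ᵥ fun t => x (i.castSucc, t)) s := by
    intro i s
    rw [hy]
    show ∑ r : Fin (M+1) × Fin m,
        shiftN m M C (i.succ, s) r * x r = _
    rw [Fintype.sum_prod_type]
    rw [Finset.sum_eq_single (i.castSucc)]
    · simp only [shiftN, Matrix.of_apply]
      have : ((i.succ : Fin (M+1)) : ℕ) = ((i.castSucc : Fin (M+1)) : ℕ) + 1 := by simp
      simp only [this, if_pos rfl]
      simp [Matrix.mulVec, dotProduct]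
    · intro j _ hj
      apply Finset.sum_eq_zero
      intro t _
      have hne : ((i.succ : Fin (M+1)) : ℕ) ≠ ((j : Fin (M+1)) : ℕ) + 1 := by
        intro h
        apply hj
        apply Fin.ext
        simp only [Fin.val_succ] at h
        simp only [Fin.coe_castSucc]
        omega
      have hz : shiftN m M C (i.succ, s) (j, t) = 0 := if_neg hne
      rw [hz, zero_mul]
    · simp
  rw [Fintype.sum_prod_type, Fintype.sum_prod_type]
  rw [Fin.sum_univ_succ]
  have h0 : (∑ s : Fin m, ‖y (0, s)‖ ^ 2) = 0 := by
    apply Finset.sum_eq_zero; intro s _; rw [hy0]; simp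
  rw [show (∑ s : Fin m, ‖(shiftN m M C *ᵥ x.ofLp) (0, s)‖ ^ 2) = 0 from h0, zero_add]
  have key : ∀ i : Fin M,
      (∑ s : Fin m, ‖y (i.succ, s)‖ ^ 2) ≤ ∑ t : Fin m, ‖x (i.castSucc, t)‖ ^ 2 := by
    intro i
    set v : EuclideanSpace ℝ (Fin m) :=
      (WithLp.equiv 2 (Fin m → ℝ)).symm (fun t => x (i.castSucc, t)) with hv
    have hvn : ‖v‖ ^ 2 = ∑ t : Fin m, ‖x (i.castSucc, t)‖ ^ 2 := by
      rw [EuclideanSpace.norm_eq, Real.sq_sqrt (by positivity)]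
      rfl
    set w : EuclideanSpace ℝ (Fin m) := Matrix.toEuclideanLin (C (i : ℕ)) v with hw
    have hwapp : ∀ s, w s = y (i.succ, s) := by
      intro s
      rw [hysucc i s, hw, hv, Matrix.toEuclideanLin_apply]
      rfl
    have hwn : (∑ s : Fin m, ‖y (i.succ, s)‖ ^ 2) = ‖w‖ ^ 2 := by
      rw [EuclideanSpace.norm_eq, Real.sq_sqrt (by positivity)]
      simp only [hwapp]
    rw [hwn, ← hvn]
    have h1 : ‖w‖ ≤ ‖v‖ := by
      calc ‖w‖ ≤ specNorm (C (i : ℕ)) * ‖v‖ := toEuclideanLin_norm_le _ _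
        _ ≤ 1 * ‖v‖ := by
            apply mul_le_mul_of_nonneg_right (hC _ i.isLt) (norm_nonneg _)
        _ = ‖v‖ := one_mul _
    exact pow_le_pow_left₀ (norm_nonneg _) h1 2
  calc (∑ i : Fin M, ∑ s : Fin m, ‖y (i.succ, s)‖ ^ 2)
      ≤ ∑ i : Fin M, ∑ t : Fin m, ‖x (i.castSucc, t)‖ ^ 2 :=
        Finset.sum_le_sum fun i _ => key i
    _ ≤ ∑ j : Fin (M + 1), ∑ t : Fin m, ‖x (j, t)‖ ^ 2 := by
        rw [Fin.sum_univ_castSucc]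
        have : (0:ℝ) ≤ ∑ t : Fin m, ‖x (Fin.last M, t)‖ ^ 2 := by positivity
        linarith


/-- **Lemma 3 (condition number bound).**  If `‖C_k‖ ≤ 1` (spectral norm) for all
`k < M`, then the forward-Euler block matrix `Ã` is invertible and its condition
number `κ = ‖Ã‖·‖Ã⁻¹‖` satisfies `κ ≤ 3(M+1)`. -/
theorem eulerBlockMatrix_condition_number (m M : ℕ) (hm : 1 ≤ m)
    (C : ℕ → Matrix (Fin m) (Fin m) ℝ) (hC : ∀ k < M, specNorm (C k) ≤ 1) :
    IsUnit (eulerBlockMatrix m M C) ∧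
      specNorm (eulerBlockMatrix m M C) * specNorm (eulerBlockMatrix m M C)⁻¹ ≤
        3 * (M + 1) := by
  have hmne : Nonempty (Fin m) := ⟨⟨0, hm⟩⟩
  set N := shiftN m M C with hN
  have heq : eulerBlockMatrix m M C = 1 - N := euler_eq_one_sub m M C
  have hnil : IsNilpotent N := ⟨M + 1, shiftN_nilpotent m M C⟩
  have hunit : IsUnit (eulerBlockMatrix m M C) := heq ▸ hnil.isUnit_one_sub
  refine ⟨hunit, ?_⟩
  -- norms (L2 operator norm instance)
  have hspec : ∀ A : Matrix (Fin (M+1) × Fin m) (Fin (M+1) × Fin m) ℝ,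
      specNorm A = ‖A‖ := fun A => rfl
  have hone : ‖(1 : Matrix (Fin (M+1) × Fin m) (Fin (M+1) × Fin m) ℝ)‖ ≤ 1 := by
    have : ‖(1 : Matrix (Fin (M+1) × Fin m) (Fin (M+1) × Fin m) ℝ)‖ =
        ‖(Matrix.toEuclideanCLM (𝕜 := ℝ) (1 : Matrix (Fin (M+1) × Fin m) (Fin (M+1) × Fin m) ℝ))‖ := rfl
    rw [this, map_one]
    exact ContinuousLinearMap.norm_id_le
  have hNle : ‖N‖ ≤ 1 := shiftN_norm_le m M C hC
  -- the inverse is the geometric sum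
  set B : Matrix (Fin (M+1) × Fin m) (Fin (M+1) × Fin m) ℝ :=
    ∑ i ∈ Finset.range (M + 1), N ^ i with hB
  have hmul : eulerBlockMatrix m M C * B = 1 := by
    rw [heq, hB]
    have := mul_geom_sum N (M + 1)
    have h2 : (1 - N) * ∑ i ∈ Finset.range (M + 1), N ^ i
        = -(N ^ (M+1) - 1) := by
      rw [← this, ← neg_sub N 1, neg_mul]
    rw [h2, shiftN_nilpotent m M C]
    simp
  have hinv : (eulerBlockMatrix m M C)⁻¹ = B := Matrix.inv_eq_right_inv hmul
  -- norm bounds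
  have hpow : ∀ i : ℕ, ‖N ^ i‖ ≤ 1 := by
    intro i
    induction i with
    | zero => simpa using hone
    | succ i ih =>
      calc ‖N ^ (i+1)‖ = ‖N ^ i * N‖ := by rw [pow_succ]
        _ ≤ ‖N ^ i‖ * ‖N‖ := norm_mul_le _ _
        _ ≤ 1 * 1 := mul_le_mul ih hNle (norm_nonneg _) zero_le_one
        _ = 1 := one_mul 1
  have hBle : ‖B‖ ≤ (M + 1 : ℝ) := by
    calc ‖B‖ ≤ ∑ i ∈ Finset.range (M + 1), ‖N ^ i‖ := norm_sum_le _ _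
      _ ≤ ∑ i ∈ Finset.range (M + 1), (1:ℝ) := Finset.sum_le_sum fun i _ => hpow i
      _ = (M + 1 : ℝ) := by simp
  have hAle : ‖eulerBlockMatrix m M C‖ ≤ 2 := by
    rw [heq]
    calc ‖(1 : Matrix _ _ ℝ) - N‖ ≤ ‖(1 : Matrix _ _ ℝ)‖ + ‖N‖ := norm_sub_le _ _
      _ ≤ 1 + 1 := add_le_add hone hNle
      _ = 2 := by norm_num
  rw [hspec, hspec, hinv]
  calc ‖eulerBlockMatrix m M C‖ * ‖B‖ ≤ 2 * (M + 1 : ℝ) :=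
        mul_le_mul hAle hBle (norm_nonneg _) (by norm_num)
    _ ≤ 3 * (M + 1 : ℝ) := by have : (0:ℝ) ≤ (M:ℝ) := Nat.cast_nonneg M; nlinarith
end

section
/- Let u : [0,T] → ℝⁿ solve the quadratic ODE under the stated assumptions. For every ε > 0 there exists M ∈ ℕ with step size h = T/M such that the forward-Euler iterates û^{k+1} = û^k + h(F₀(kh) + F₁û^k + F₂(û^k ⊗ û^k)), û⁰ = u₀, satisfy ‖ u_c/‖u_c‖ − ũ/‖ũ‖ ‖ ≤ ε, where u_c = (u(0)ᵀ, u(h)ᵀ, …, u(Mh)ᵀ)ᵀ and ũ = ((û⁰)ᵀ, (û¹)ᵀ, …, (û^M)ᵀ)ᵀ (both nonzero). -/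
/-- Application of a matrix to a Euclidean vector. -/
noncomputable def mApp {ι κ : Type*} [Fintype ι] [Fintype κ] [DecidableEq κ]
    (M : Matrix ι κ ℝ) (v : EuclideanSpace ℝ κ) : EuclideanSpace ℝ ι :=
  Matrix.toEuclideanLin M v

/-- The Kronecker product of two Euclidean vectors: `(x ⊗ y)_{(i,k)} = x_i y_k`. -/
noncomputable def kron {ι κ : Type*} [Fintype ι] [Fintype κ]
    (x : EuclideanSpace ℝ ι) (y : EuclideanSpace ℝ κ) : EuclideanSpace ℝ (ι × κ) :=
  (WithLp.equiv 2 _).symm fun p => x p.1 * y p.2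

lemma specNorm_nonneg {ι κ : Type*} [Fintype ι] [Fintype κ] [DecidableEq κ]
    (M : Matrix ι κ ℝ) : 0 ≤ specNorm M := norm_nonneg _

lemma norm_mApp_le {ι κ : Type*} [Fintype ι] [Fintype κ] [DecidableEq κ]
    (M : Matrix ι κ ℝ) (v : EuclideanSpace ℝ κ) : ‖mApp M v‖ ≤ specNorm M * ‖v‖ := by
  have := (LinearMap.toContinuousLinearMap (Matrix.toEuclideanLin M)).le_opNorm v
  simpa [mApp, specNorm] using this

lemma mApp_sub {ι κ : Type*} [Fintype ι] [Fintype κ] [DecidableEq κ]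
    (M : Matrix ι κ ℝ) (a b : EuclideanSpace ℝ κ) :
    mApp M (a - b) = mApp M a - mApp M b := map_sub _ _ _

lemma mApp_add {ι κ : Type*} [Fintype ι] [Fintype κ] [DecidableEq κ]
    (M : Matrix ι κ ℝ) (a b : EuclideanSpace ℝ κ) :
    mApp M (a + b) = mApp M a + mApp M b := map_add _ _ _

lemma kron_apply {ι κ : Type*} [Fintype ι] [Fintype κ]
    (x : EuclideanSpace ℝ ι) (y : EuclideanSpace ℝ κ) (p : ι × κ) :
    kron x y p = x p.1 * y p.2 := rfl

lemma norm_kron {ι κ : Type*} [Fintype ι] [Fintype κ]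
    (x : EuclideanSpace ℝ ι) (y : EuclideanSpace ℝ κ) : ‖kron x y‖ = ‖x‖ * ‖y‖ := by
  rw [EuclideanSpace.norm_eq, EuclideanSpace.norm_eq, EuclideanSpace.norm_eq,
    ← Real.sqrt_mul (by positivity), Finset.sum_mul_sum]
  congr 1
  rw [← Fintype.sum_prod_type']
  refine Finset.sum_congr rfl fun p _ => ?_
  rw [kron_apply]
  simp [mul_pow]

lemma kron_sub_kron {ι : Type*} [Fintype ι] (x y : EuclideanSpace ℝ ι) :
    kron x x - kron y y = kron x (x - y) + kron (x - y) y := by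
  ext p
  simp only [kron, PiLp.sub_apply, PiLp.add_apply, WithLp.equiv_symm_apply, PiLp.toLp_apply]
  ring

/-- Lipschitz estimate for the quadratic part on a ball of radius `R`. -/
lemma quad_lip {n : ℕ} (F1 : Matrix (Fin n) (Fin n) ℝ) (F2 : Matrix (Fin n) (Fin n × Fin n) ℝ)
    (R : ℝ) (x y : EuclideanSpace ℝ (Fin n)) (hx : ‖x‖ ≤ R) (hy : ‖y‖ ≤ R) :
    ‖(mApp F1 x + mApp F2 (kron x x)) - (mApp F1 y + mApp F2 (kron y y))‖ ≤
      (specNorm F1 + 2 * specNorm F2 * R) * ‖x - y‖ := by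
  have h1 : (mApp F1 x + mApp F2 (kron x x)) - (mApp F1 y + mApp F2 (kron y y)) =
      mApp F1 (x - y) + (mApp F2 (kron x (x - y)) + mApp F2 (kron (x - y) y)) := by
    rw [mApp_sub, ← mApp_add, ← kron_sub_kron, mApp_sub]
    abel
  rw [h1]
  have hR : 0 ≤ R := le_trans (norm_nonneg x) hx
  have b1 := norm_mApp_le F1 (x - y)
  have b2 := norm_mApp_le F2 (kron x (x - y))
  have b3 := norm_mApp_le F2 (kron (x - y) y)
  rw [norm_kron] at b2 b3
  have hs2 := specNorm_nonneg F2
  have hd : (0:ℝ) ≤ ‖x - y‖ := norm_nonneg _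
  calc ‖mApp F1 (x - y) + (mApp F2 (kron x (x - y)) + mApp F2 (kron (x - y) y))‖
      ≤ ‖mApp F1 (x - y)‖ + (‖mApp F2 (kron x (x - y))‖ + ‖mApp F2 (kron (x - y) y)‖) :=
        norm_add_le _ _ |>.trans (by gcongr; exact norm_add_le _ _)
    _ ≤ specNorm F1 * ‖x - y‖ + (specNorm F2 * (R * ‖x - y‖) + specNorm F2 * (‖x - y‖ * R)) := by
        refine add_le_add b1 (add_le_add (b2.trans ?_) (b3.trans ?_)) <;> gcongr
    _ = (specNorm F1 + 2 * specNorm F2 * R) * ‖x - y‖ := by ring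

/-- Bound on the difference of normalizations. -/
lemma norm_normalize_sub_le {E : Type*} [NormedAddCommGroup E] [NormedSpace ℝ E]
    (x y : E) (hx : x ≠ 0) (hy : y ≠ 0) :
    ‖‖x‖⁻¹ • x - ‖y‖⁻¹ • y‖ ≤ 2 * ‖x - y‖ / ‖x‖ := by
  have hx0 : (0:ℝ) < ‖x‖ := norm_pos_iff.2 hx
  have hy0 : (0:ℝ) < ‖y‖ := norm_pos_iff.2 hy
  have h1 : ‖x‖⁻¹ • x - ‖y‖⁻¹ • y = ‖x‖⁻¹ • (x - y) + (‖x‖⁻¹ - ‖y‖⁻¹) • y := by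
    rw [smul_sub, sub_smul]; abel
  rw [h1]
  have b1 : ‖‖x‖⁻¹ • (x - y)‖ = ‖x - y‖ / ‖x‖ := by
    rw [norm_smul, norm_inv, norm_norm]; rw [div_eq_inv_mul]
  have b2 : ‖(‖x‖⁻¹ - ‖y‖⁻¹) • y‖ ≤ ‖x - y‖ / ‖x‖ := by
    rw [norm_smul, Real.norm_eq_abs]
    have key : |‖x‖⁻¹ - ‖y‖⁻¹| = |‖y‖ - ‖x‖| / (‖x‖ * ‖y‖) := by
      rw [← abs_of_pos (mul_pos hx0 hy0), ← abs_div]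
      congr 1
      field_simp
    rw [key]
    have hle : |‖y‖ - ‖x‖| ≤ ‖x - y‖ := by
      rw [norm_sub_rev]; exact abs_norm_sub_norm_le y x
    calc |‖y‖ - ‖x‖| / (‖x‖ * ‖y‖) * ‖y‖ = |‖y‖ - ‖x‖| / ‖x‖ := by field_simp
      _ ≤ ‖x - y‖ / ‖x‖ := by gcongr
  calc ‖‖x‖⁻¹ • (x - y) + (‖x‖⁻¹ - ‖y‖⁻¹) • y‖ ≤
        ‖‖x‖⁻¹ • (x - y)‖ + ‖(‖x‖⁻¹ - ‖y‖⁻¹) • y‖ := norm_add_le _ _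
    _ ≤ ‖x - y‖ / ‖x‖ + ‖x - y‖ / ‖x‖ := by rw [b1]; gcongr
    _ = 2 * ‖x - y‖ / ‖x‖ := by ring


set_option maxHeartbeats 1000000 in
/-- **Theorem (classical forward Euler for the quadratic ODE).**
Let `u` solve `u' = F₀(t) + F₁u + F₂(u⊗u)` on `[0,T]`, `u(0) = u₀`, under the
assumptions: `⟨x,F₁x⟩ ≤ λ₁‖x‖²` with `λ₁ < 0`; `F₀` is continuously
differentiable with `sup_{[0,T]}‖F₀'‖ < ∞`; `u₀ ≠ 0`; `‖u₀‖ < 1`;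
`R₂ = (‖u₀‖‖F₂‖ + ‖F₀‖/‖u₀‖)/|λ₁| < 1`; `‖F₂‖ + ‖F₀‖ < |λ₁|` (rescaled system).
Then for every `ε > 0` there is an `M ≥ 1` with step size `h = T/M` such that the
forward-Euler iterates `uE^{k+1} = uE^k + h(F₀(kh) + F₁uE^k + F₂(uE^k ⊗ uE^k))`,
`uE⁰ = u₀`, have stacked vectors `u_c = (u(0),…,u(Mh))`, `ũ = (uE⁰,…,uE^M)` that are
nonzero and satisfy `‖u_c/‖u_c‖ − ũ/‖ũ‖‖ ≤ ε`. -/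
theorem classical_euler_normalized_solution (n : ℕ) (hn : 1 ≤ n) (T : ℝ) (hT : 0 < T)
    (F₀ : ℝ → EuclideanSpace ℝ (Fin n)) (F₀' : ℝ → EuclideanSpace ℝ (Fin n))
    (F1 : Matrix (Fin n) (Fin n) ℝ) (F2 : Matrix (Fin n) (Fin n × Fin n) ℝ)
    (u₀ : EuclideanSpace ℝ (Fin n)) (u : ℝ → EuclideanSpace ℝ (Fin n))
    (lam₁ nF0 sF0' : ℝ)
    -- assumptions on the data
    (hlam : lam₁ < 0)
    (hquad : ∀ x : EuclideanSpace ℝ (Fin n), (inner ℝ x (mApp F1 x) : ℝ) ≤ lam₁ * ‖x‖ ^ 2)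
    (hF₀deriv : ∀ t : ℝ, HasDerivAt F₀ (F₀' t) t) (hF₀'cont : Continuous F₀')
    (hnF0 : IsLUB ((fun t => ‖F₀ t‖) '' Set.Icc 0 T) nF0)
    (hsF0' : IsLUB ((fun t => ‖F₀' t‖) '' Set.Icc 0 T) sF0')
    (hu₀ : u₀ ≠ 0) (hu₀small : ‖u₀‖ < 1)
    (hR2 : (‖u₀‖ * specNorm F2 + nF0 / ‖u₀‖) / |lam₁| < 1)
    (hresc : specNorm F2 + nF0 < |lam₁|)
    -- u solves the quadratic ODE
    (hu0 : u 0 = u₀)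
    (hode : ∀ t ∈ Set.Icc (0 : ℝ) T,
      HasDerivAt u (F₀ t + mApp F1 (u t) + mApp F2 (kron (u t) (u t))) t)
    (ε : ℝ) (hε : 0 < ε) :
    ∃ M : ℕ, 1 ≤ M ∧
      ∀ uE : ℕ → EuclideanSpace ℝ (Fin n),
        uE 0 = u₀ →
        (∀ k : ℕ, uE (k + 1) = uE k + (T / M) •
          (F₀ (k * (T / M)) + mApp F1 (uE k) + mApp F2 (kron (uE k) (uE k)))) →
        Real.sqrt (∑ k ∈ Finset.range (M + 1), ‖u (k * (T / M))‖ ^ 2) ≠ 0 ∧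
        Real.sqrt (∑ k ∈ Finset.range (M + 1), ‖uE k‖ ^ 2) ≠ 0 ∧
        Real.sqrt (∑ k ∈ Finset.range (M + 1),
          ‖(Real.sqrt (∑ j ∈ Finset.range (M + 1), ‖u (j * (T / M))‖ ^ 2))⁻¹ • u (k * (T / M)) -
            (Real.sqrt (∑ j ∈ Finset.range (M + 1), ‖uE j‖ ^ 2))⁻¹ • uE k‖ ^ 2) ≤ ε := by
  have hu₀pos : (0:ℝ) < ‖u₀‖ := norm_pos_iff.2 hu₀
  -- a priori bound on u over [0,T]
  have hucont : ContinuousOn u (Set.Icc 0 T) := fun t ht =>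
    ((hode t ht).continuousAt).continuousWithinAt
  obtain ⟨B, hB⟩ := isCompact_Icc.exists_bound_of_continuousOn hucont
  have h0T : (0:ℝ) ∈ Set.Icc (0:ℝ) T := ⟨le_refl 0, hT.le⟩
  have hB0 : 0 ≤ B := le_trans (norm_nonneg _) (hB 0 h0T)
  have hF0le : ∀ t ∈ Set.Icc (0:ℝ) T, ‖F₀ t‖ ≤ nF0 := fun t ht => hnF0.1 ⟨t, ht, rfl⟩
  have hnF00 : 0 ≤ nF0 := le_trans (norm_nonneg _) (hF0le 0 h0T)
  have hsF0le : ∀ t ∈ Set.Icc (0:ℝ) T, ‖F₀' t‖ ≤ sF0' := fun t ht => hsF0'.1 ⟨t, ht, rfl⟩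
  have hsF00 : 0 ≤ sF0' := le_trans (norm_nonneg _) (hsF0le 0 h0T)
  have hs1 := specNorm_nonneg F1
  have hs2 := specNorm_nonneg F2
  set L : ℝ := specNorm F1 + 2 * specNorm F2 * (B + 1) + 1 with hLdef
  have hL : 0 < L := by nlinarith
  set Mf : ℝ := nF0 + specNorm F1 * B + specNorm F2 * B ^ 2 with hMfdef
  have hMf0 : 0 ≤ Mf := by nlinarith
  -- derivative bound
  have hup : ∀ t ∈ Set.Icc (0:ℝ) T,
      ‖F₀ t + mApp F1 (u t) + mApp F2 (kron (u t) (u t))‖ ≤ Mf := by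
    intro t ht
    have b1 := hF0le t ht
    have b2 := norm_mApp_le F1 (u t)
    have b3 := norm_mApp_le F2 (kron (u t) (u t))
    rw [norm_kron] at b3
    have hut := hB t ht
    have hut0 := norm_nonneg (u t)
    calc ‖F₀ t + mApp F1 (u t) + mApp F2 (kron (u t) (u t))‖
        ≤ ‖F₀ t‖ + ‖mApp F1 (u t)‖ + ‖mApp F2 (kron (u t) (u t))‖ := norm_add₃_le
      _ ≤ Mf := by
          have c1 : specNorm F1 * ‖u t‖ ≤ specNorm F1 * B := mul_le_mul_of_nonneg_left hut hs1
          have c2 : ‖u t‖ * ‖u t‖ ≤ B ^ 2 := by nlinarith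
          have c3 : specNorm F2 * (‖u t‖ * ‖u t‖) ≤ specNorm F2 * B ^ 2 :=
            mul_le_mul_of_nonneg_left c2 hs2
          rw [hMfdef]; linarith
  -- u is Lipschitz on [0,T]
  have hulip : ∀ s ∈ Set.Icc (0:ℝ) T, ∀ t ∈ Set.Icc (0:ℝ) T, ‖u s - u t‖ ≤ Mf * |s - t| := by
    intro s hs t ht
    have := Convex.norm_image_sub_le_of_norm_hasDerivWithin_le
      (f := u) (f' := fun r => F₀ r + mApp F1 (u r) + mApp F2 (kron (u r) (u r)))
      (fun r hr => (hode r hr).hasDerivWithinAt) hup (convex_Icc 0 T) ht hs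
    simpa [Real.norm_eq_abs] using this
  -- F₀ is Lipschitz on [0,T]
  have hF0lip : ∀ s ∈ Set.Icc (0:ℝ) T, ∀ t ∈ Set.Icc (0:ℝ) T, ‖F₀ s - F₀ t‖ ≤ sF0' * |s - t| := by
    intro s hs t ht
    have := Convex.norm_image_sub_le_of_norm_hasDerivWithin_le
      (f := F₀) (f' := F₀')
      (fun r _ => (hF₀deriv r).hasDerivWithinAt) hsF0le (convex_Icc 0 T) ht hs
    simpa [Real.norm_eq_abs] using this
  set Cq : ℝ := sF0' + L * Mf with hCqdef
  have hCq0 : 0 ≤ Cq := by nlinarith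
  set A : ℝ := (Cq / L) * (Real.exp (L * T) - 1) with hAdef
  have hexp1 : 1 ≤ Real.exp (L * T) := Real.one_le_exp (by positivity)
  have hA0 : 0 ≤ A := mul_nonneg (div_nonneg hCq0 hL.le) (by linarith)
  set Q : ℝ := 2 * A * T / ‖u₀‖ with hQdef
  have hQ0 : 0 ≤ Q := by positivity
  refine ⟨max (max 1 ⌈A * T⌉₊) ⌈2 * Q ^ 2 / ε ^ 2⌉₊, ?_, ?_⟩
  · exact le_trans (le_max_left 1 _) (le_max_left _ _)
  set M : ℕ := max (max 1 ⌈A * T⌉₊) ⌈2 * Q ^ 2 / ε ^ 2⌉₊ with hMdef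
  have hM1 : 1 ≤ M := le_trans (le_max_left 1 _) (le_max_left _ _)
  have hMpos : (0:ℝ) < M := by exact_mod_cast Nat.lt_of_lt_of_le Nat.zero_lt_one hM1
  have hMA : A * T ≤ (M:ℝ) :=
    le_trans (Nat.le_ceil _) (Nat.cast_le.2 (le_trans (le_max_right 1 _) (le_max_left _ _)))
  have hMQ : 2 * Q ^ 2 / ε ^ 2 ≤ (M:ℝ) :=
    le_trans (Nat.le_ceil _) (Nat.cast_le.2 (le_max_right _ _))
  intro uE huE0 huEstep
  set dt : ℝ := T / (M:ℝ) with hdtdef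
  have hdt : 0 < dt := div_pos hT hMpos
  have hMdt : (M:ℝ) * dt = T := by rw [hdtdef]; field_simp [hMpos.ne']
  -- A * dt ≤ 1
  have hAdt1 : A * dt ≤ 1 := by
    rw [hdtdef, mul_div_assoc'] -- A * (T/M) = A*T/M
    exact div_le_one_of_le₀ hMA hMpos.le
  -- power bound
  have powk : ∀ k : ℕ, k ≤ M → (1 + dt * L) ^ k ≤ Real.exp (L * T) := by
    intro k hk
    have h1 : 1 + dt * L ≤ Real.exp (dt * L) := by
      have := Real.add_one_le_exp (dt * L); linarith
    have hkM : (k:ℝ) ≤ M := Nat.cast_le.2 hk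
    calc (1 + dt * L) ^ k ≤ (Real.exp (dt * L)) ^ k :=
          pow_le_pow_left₀ (by positivity) h1 k
      _ = Real.exp (k * (dt * L)) := by rw [← Real.exp_nat_mul]
      _ ≤ Real.exp (L * T) := by
          refine Real.exp_le_exp.2 ?_
          have h2 : (k:ℝ) * dt ≤ (M:ℝ) * dt := mul_le_mul_of_nonneg_right hkM hdt.le
          rw [hMdt] at h2
          calc (k:ℝ) * (dt * L) = ((k:ℝ) * dt) * L := by ring
            _ ≤ T * L := mul_le_mul_of_nonneg_right h2 hL.le
            _ = L * T := by ring
  have hrk : ∀ k : ℕ, k ≤ M → (Cq / L) * dt * ((1 + dt * L) ^ k - 1) ≤ A * dt := by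
    intro k hk
    have hp := powk k hk
    have h1 : (Cq / L) * dt * ((1 + dt * L) ^ k - 1) ≤
        (Cq / L) * dt * (Real.exp (L * T) - 1) :=
      mul_le_mul_of_nonneg_left (by linarith) (by positivity)
    calc (Cq / L) * dt * ((1 + dt * L) ^ k - 1) ≤
        (Cq / L) * dt * (Real.exp (L * T) - 1) := h1
      _ = A * dt := by rw [hAdef]; ring
  -- the key induction
  have key : ∀ k : ℕ, k ≤ M → ‖u (k * dt) - uE k‖ ≤ (Cq / L) * dt * ((1 + dt * L) ^ k - 1) := by
    intro k
    induction k with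
    | zero => intro _; simp [hu0, huE0]
    | succ k ih =>
      intro hk1
      have hk : k ≤ M := Nat.le_of_succ_le hk1
      have ek := ih hk
      set a : ℝ := (k:ℝ) * dt with hadef
      have hb : ((k+1 : ℕ):ℝ) * dt = a + dt := by push_cast; ring
      have hkM : (k:ℝ) ≤ M := Nat.cast_le.2 hk
      have hk1M : ((k:ℝ) + 1) ≤ M := by
        have : ((k+1:ℕ):ℝ) ≤ (M:ℝ) := Nat.cast_le.2 hk1
        push_cast at this; linarith
      have ha0 : 0 ≤ a := by positivity
      have haT : a + dt ≤ T := by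
        calc a + dt = ((k:ℝ) + 1) * dt := by rw [hadef]; ring
          _ ≤ (M:ℝ) * dt := mul_le_mul_of_nonneg_right hk1M hdt.le
          _ = T := hMdt
      have hmema : a ∈ Set.Icc (0:ℝ) T := ⟨ha0, by linarith [hdt.le]⟩
      have hmemb : a + dt ∈ Set.Icc (0:ℝ) T := ⟨by linarith, haT⟩
      have hsub : Set.Icc a (a + dt) ⊆ Set.Icc (0:ℝ) T := Set.Icc_subset_Icc ha0 haT
      set v := F₀ a + mApp F1 (u a) + mApp F2 (kron (u a) (u a)) with hvdef
      -- truncation estimate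
      have trunc : ‖u (a + dt) - u a - dt • v‖ ≤ Cq * dt * dt := by
        have hg : ∀ s ∈ Set.Icc a (a + dt), HasDerivWithinAt (fun r => u r - r • v)
            ((F₀ s + mApp F1 (u s) + mApp F2 (kron (u s) (u s))) - v) (Set.Icc a (a + dt)) s := by
          intro s hs
          have h2 : HasDerivAt (fun r : ℝ => r • v) v s := by
            simpa using (hasDerivAt_id s).smul_const v
          exact ((hode s (hsub hs)).sub h2).hasDerivWithinAt
        have hbound : ∀ s ∈ Set.Icc a (a + dt),
            ‖(F₀ s + mApp F1 (u s) + mApp F2 (kron (u s) (u s))) - v‖ ≤ Cq * dt := by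
          intro s hs
          have hsIcc := hsub hs
          have e1 : ‖F₀ s - F₀ a‖ ≤ sF0' * |s - a| := hF0lip s hsIcc a hmema
          have e2 := quad_lip F1 F2 (B + 1) (u s) (u a)
            (le_trans (hB s hsIcc) (by linarith)) (le_trans (hB a hmema) (by linarith))
          have e3 : ‖u s - u a‖ ≤ Mf * |s - a| := hulip s hsIcc a hmema
          have e4 : |s - a| ≤ dt := by
            rw [abs_of_nonneg (by linarith [hs.1])]; linarith [hs.2]
          have habs0 : 0 ≤ |s - a| := abs_nonneg _
          have rearr : (F₀ s + mApp F1 (u s) + mApp F2 (kron (u s) (u s))) - v =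
              (F₀ s - F₀ a) + ((mApp F1 (u s) + mApp F2 (kron (u s) (u s))) -
                (mApp F1 (u a) + mApp F2 (kron (u a) (u a)))) := by
            rw [hvdef]; abel
          rw [rearr]
          have e1' : ‖F₀ s - F₀ a‖ ≤ sF0' * dt :=
            e1.trans (mul_le_mul_of_nonneg_left e4 hsF00)
          have e2' : ‖(mApp F1 (u s) + mApp F2 (kron (u s) (u s))) -
              (mApp F1 (u a) + mApp F2 (kron (u a) (u a)))‖ ≤ L * (Mf * dt) := by
            refine e2.trans ?_
            have husa : ‖u s - u a‖ ≤ Mf * dt :=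
              e3.trans (mul_le_mul_of_nonneg_left e4 hMf0)
            have hc0 : 0 ≤ specNorm F1 + 2 * specNorm F2 * (B + 1) := by
              have := mul_nonneg hs2 (by linarith : (0:ℝ) ≤ B + 1); linarith
            have hcL : specNorm F1 + 2 * specNorm F2 * (B + 1) ≤ L := by rw [hLdef]; linarith
            have := mul_le_mul hcL husa (norm_nonneg _) hL.le
            linarith
          calc ‖(F₀ s - F₀ a) + ((mApp F1 (u s) + mApp F2 (kron (u s) (u s))) -
                (mApp F1 (u a) + mApp F2 (kron (u a) (u a))))‖
              ≤ ‖F₀ s - F₀ a‖ + ‖(mApp F1 (u s) + mApp F2 (kron (u s) (u s))) -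
                (mApp F1 (u a) + mApp F2 (kron (u a) (u a)))‖ := norm_add_le _ _
            _ ≤ sF0' * dt + L * (Mf * dt) := add_le_add e1' e2'
            _ = Cq * dt := by rw [hCqdef]; ring
        have hmvt := Convex.norm_image_sub_le_of_norm_hasDerivWithin_le hg hbound
          (convex_Icc a (a + dt)) (Set.left_mem_Icc.2 (by linarith))
          (Set.right_mem_Icc.2 (by linarith))
        have hnorm : ‖(a + dt) - a‖ = dt := by
          rw [Real.norm_eq_abs, add_sub_cancel_left, abs_of_pos hdt]
        have hidd : (u (a + dt) - (a + dt) • v) - (u a - a • v) =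
            u (a + dt) - u a - dt • v := by
          rw [add_smul]; abel
        rw [hidd, hnorm] at hmvt
        exact hmvt
      -- Euler iterate stays in the ball
      have hrkk := hrk k hk
      have huEk : ‖uE k‖ ≤ B + 1 := by
        have h1 : ‖u a‖ ≤ B := hB a hmema
        have h2 : ‖u a - uE k‖ ≤ 1 := le_trans ek (le_trans hrkk hAdt1)
        calc ‖uE k‖ = ‖u a - (u a - uE k)‖ := by rw [sub_sub_cancel]
          _ ≤ ‖u a‖ + ‖u a - uE k‖ := norm_sub_le _ _
          _ ≤ B + 1 := add_le_add h1 h2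
      -- one Euler step identity
      have hstepeq : u (a + dt) - uE (k + 1) = (u (a + dt) - u a - dt • v) + (u a - uE k)
          + dt • ((mApp F1 (u a) + mApp F2 (kron (u a) (u a))) -
            (mApp F1 (uE k) + mApp F2 (kron (uE k) (uE k)))) := by
        rw [huEstep k, hvdef]
        module
      -- Lipschitz bound on the quadratic part
      have hq : ‖(mApp F1 (u a) + mApp F2 (kron (u a) (u a))) -
          (mApp F1 (uE k) + mApp F2 (kron (uE k) (uE k)))‖ ≤ L * ‖u a - uE k‖ := by
        have := quad_lip F1 F2 (B + 1) (u a) (uE k)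
          (le_trans (hB a hmema) (by linarith)) huEk
        refine this.trans ?_
        have hcL : specNorm F1 + 2 * specNorm F2 * (B + 1) ≤ L := by rw [hLdef]; linarith
        exact mul_le_mul_of_nonneg_right hcL (norm_nonneg _)
      -- combine
      have step : ‖u (a + dt) - uE (k + 1)‖ ≤
          Cq * dt * dt + (1 + dt * L) * ‖u a - uE k‖ := by
        rw [hstepeq]
        calc ‖(u (a + dt) - u a - dt • v) + (u a - uE k) + dt • _‖
            ≤ ‖u (a + dt) - u a - dt • v‖ + ‖u a - uE k‖ + ‖dt • ((mApp F1 (u a) +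
              mApp F2 (kron (u a) (u a))) - (mApp F1 (uE k) + mApp F2 (kron (uE k) (uE k))))‖ :=
              norm_add₃_le
          _ ≤ Cq * dt * dt + ‖u a - uE k‖ + dt * (L * ‖u a - uE k‖) := by
              refine add_le_add (add_le_add trunc (le_refl _)) ?_
              rw [norm_smul, Real.norm_eq_abs, abs_of_pos hdt]
              exact mul_le_mul_of_nonneg_left hq hdt.le
          _ = Cq * dt * dt + (1 + dt * L) * ‖u a - uE k‖ := by ring
      have hfin : Cq * dt * dt + (1 + dt * L) * ((Cq / L) * dt * ((1 + dt * L) ^ k - 1)) =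
          (Cq / L) * dt * ((1 + dt * L) ^ (k + 1) - 1) := by
        field_simp
        ring
      have hmono : (1 + dt * L) * ‖u a - uE k‖ ≤
          (1 + dt * L) * ((Cq / L) * dt * ((1 + dt * L) ^ k - 1)) :=
        mul_le_mul_of_nonneg_left ek (by positivity)
      calc ‖u (↑(k + 1) * dt) - uE (k + 1)‖ = ‖u (a + dt) - uE (k + 1)‖ := by rw [hb]
        _ ≤ Cq * dt * dt + (1 + dt * L) * ‖u a - uE k‖ := step
        _ ≤ Cq * dt * dt + (1 + dt * L) * ((Cq / L) * dt * ((1 + dt * L) ^ k - 1)) := by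
            linarith
        _ = (Cq / L) * dt * ((1 + dt * L) ^ (k + 1) - 1) := hfin
  have eBound : ∀ k : ℕ, k ≤ M → ‖u (k * dt) - uE k‖ ≤ A * dt :=
    fun k hk => le_trans (key k hk) (hrk k hk)
  -- stacked vectors
  set X : PiLp 2 (fun _ : Fin (M + 1) => EuclideanSpace ℝ (Fin n)) :=
    WithLp.toLp 2 (fun k => u ((k : ℕ) * dt)) with hXdef
  set Y : PiLp 2 (fun _ : Fin (M + 1) => EuclideanSpace ℝ (Fin n)) :=
    WithLp.toLp 2 (fun k => uE (k : ℕ)) with hYdef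
  have hXsum : Real.sqrt (∑ k ∈ Finset.range (M + 1), ‖u (k * dt)‖ ^ 2) = ‖X‖ := by
    rw [← Real.sqrt_sq (norm_nonneg X), PiLp.norm_sq_eq_of_L2]
    congr 1
    exact (Fin.sum_univ_eq_sum_range (fun j => ‖u (j * dt)‖ ^ 2) (M + 1)).symm
  have hYsum : Real.sqrt (∑ k ∈ Finset.range (M + 1), ‖uE k‖ ^ 2) = ‖Y‖ := by
    rw [← Real.sqrt_sq (norm_nonneg Y), PiLp.norm_sq_eq_of_L2]
    congr 1
    exact (Fin.sum_univ_eq_sum_range (fun j => ‖uE j‖ ^ 2) (M + 1)).symm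
  have hXlow : ‖u₀‖ ≤ ‖X‖ := by
    have h0 : ‖u₀‖ ^ 2 ≤ ‖X‖ ^ 2 := by
      have hX0 : ‖u₀‖ ^ 2 = ‖X 0‖ ^ 2 := by
        simp [hXdef, hu0]
      calc ‖u₀‖ ^ 2 = ‖X 0‖ ^ 2 := hX0
        _ ≤ ∑ i : Fin (M + 1), ‖X i‖ ^ 2 :=
          Finset.single_le_sum (f := fun i : Fin (M + 1) => ‖X i‖ ^ 2)
            (fun i _ => sq_nonneg _) (Finset.mem_univ 0)
        _ = ‖X‖ ^ 2 := (PiLp.norm_sq_eq_of_L2 _ X).symm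
    calc ‖u₀‖ = Real.sqrt (‖u₀‖ ^ 2) := (Real.sqrt_sq (norm_nonneg _)).symm
      _ ≤ Real.sqrt (‖X‖ ^ 2) := Real.sqrt_le_sqrt h0
      _ = ‖X‖ := Real.sqrt_sq (norm_nonneg _)
  have hYlow : ‖u₀‖ ≤ ‖Y‖ := by
    have h0 : ‖u₀‖ ^ 2 ≤ ‖Y‖ ^ 2 := by
      have hY0 : ‖u₀‖ ^ 2 = ‖Y 0‖ ^ 2 := by
        simp [hYdef, huE0]
      calc ‖u₀‖ ^ 2 = ‖Y 0‖ ^ 2 := hY0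
        _ ≤ ∑ i : Fin (M + 1), ‖Y i‖ ^ 2 :=
          Finset.single_le_sum (f := fun i : Fin (M + 1) => ‖Y i‖ ^ 2)
            (fun i _ => sq_nonneg _) (Finset.mem_univ 0)
        _ = ‖Y‖ ^ 2 := (PiLp.norm_sq_eq_of_L2 _ Y).symm
    calc ‖u₀‖ = Real.sqrt (‖u₀‖ ^ 2) := (Real.sqrt_sq (norm_nonneg _)).symm
      _ ≤ Real.sqrt (‖Y‖ ^ 2) := Real.sqrt_le_sqrt h0
      _ = ‖Y‖ := Real.sqrt_sq (norm_nonneg _)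
  have hXne : X ≠ 0 := norm_pos_iff.1 (lt_of_lt_of_le hu₀pos hXlow)
  have hYne : Y ≠ 0 := norm_pos_iff.1 (lt_of_lt_of_le hu₀pos hYlow)
  have hXY : ‖X - Y‖ ≤ Real.sqrt (M + 1) * (A * dt) := by
    have h2 : ‖X - Y‖ ^ 2 ≤ (M + 1) * (A * dt) ^ 2 := by
      rw [PiLp.norm_sq_eq_of_L2]
      calc ∑ i : Fin (M + 1), ‖(X - Y) i‖ ^ 2
          ≤ ∑ _i : Fin (M + 1), (A * dt) ^ 2 := by
            refine Finset.sum_le_sum fun i _ => ?_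
            have hi := eBound (i : ℕ) (Nat.le_of_lt_succ i.isLt)
            have h' : (X - Y) i = u ((i : ℕ) * dt) - uE (i : ℕ) := rfl
            rw [h']
            exact pow_le_pow_left₀ (norm_nonneg _) hi 2
        _ = (M + 1) * (A * dt) ^ 2 := by
            rw [Finset.sum_const, Finset.card_univ, Fintype.card_fin]
            push_cast
            ring
    calc ‖X - Y‖ = Real.sqrt (‖X - Y‖ ^ 2) := (Real.sqrt_sq (norm_nonneg _)).symm
      _ ≤ Real.sqrt ((M + 1) * (A * dt) ^ 2) := Real.sqrt_le_sqrt h2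
      _ = Real.sqrt (M + 1) * (A * dt) := by
          rw [Real.sqrt_mul (by positivity), Real.sqrt_sq (by positivity)]
  -- final bound on Q * sqrt(M+1) / M
  have hfinal : Q * Real.sqrt ((M:ℝ) + 1) / M ≤ ε := by
    have hM1' : (1:ℝ) ≤ M := by exact_mod_cast Nat.one_le_cast.2 hM1
    have ha0 : 0 ≤ Q * Real.sqrt ((M:ℝ) + 1) / M := by positivity
    have hsq : (Q * Real.sqrt ((M:ℝ) + 1) / M) ^ 2 ≤ ε ^ 2 := by
      have h1 : (Q * Real.sqrt ((M:ℝ) + 1) / M) ^ 2 = Q ^ 2 * ((M:ℝ) + 1) / M ^ 2 := by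
        rw [div_pow, mul_pow, Real.sq_sqrt (by positivity)]
      rw [h1]
      have h2 : Q ^ 2 * ((M:ℝ) + 1) / M ^ 2 ≤ 2 * Q ^ 2 / M := by
        rw [div_le_div_iff₀ (by positivity) hMpos]
        nlinarith [mul_nonneg (mul_nonneg (sq_nonneg Q) hMpos.le) (sub_nonneg.2 hM1')]
      have h3 : 2 * Q ^ 2 / M ≤ ε ^ 2 := by
        rw [div_le_iff₀ hMpos]
        have := (div_le_iff₀ (by positivity : (0:ℝ) < ε ^ 2)).1 hMQ
        linarith
      linarith
    calc Q * Real.sqrt ((M:ℝ) + 1) / M = Real.sqrt ((Q * Real.sqrt ((M:ℝ) + 1) / M) ^ 2) :=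
          (Real.sqrt_sq ha0).symm
      _ ≤ Real.sqrt (ε ^ 2) := Real.sqrt_le_sqrt hsq
      _ = ε := Real.sqrt_sq hε.le
  refine ⟨by rw [hXsum]; exact ne_of_gt (lt_of_lt_of_le hu₀pos hXlow),
          by rw [hYsum]; exact ne_of_gt (lt_of_lt_of_le hu₀pos hYlow), ?_⟩
  rw [hXsum, hYsum]
  have hthird : Real.sqrt (∑ k ∈ Finset.range (M + 1),
      ‖(‖X‖)⁻¹ • u (k * dt) - (‖Y‖)⁻¹ • uE k‖ ^ 2) = ‖(‖X‖)⁻¹ • X - (‖Y‖)⁻¹ • Y‖ := by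
    rw [← Real.sqrt_sq (norm_nonneg ((‖X‖)⁻¹ • X - (‖Y‖)⁻¹ • Y)), PiLp.norm_sq_eq_of_L2]
    congr 1
    exact (Fin.sum_univ_eq_sum_range
      (fun j => ‖(‖X‖)⁻¹ • u (j * dt) - (‖Y‖)⁻¹ • uE j‖ ^ 2) (M + 1)).symm
  rw [hthird]
  calc ‖(‖X‖)⁻¹ • X - (‖Y‖)⁻¹ • Y‖ ≤ 2 * ‖X - Y‖ / ‖X‖ := norm_normalize_sub_le X Y hXne hYne
    _ ≤ 2 * (Real.sqrt (M + 1) * (A * dt)) / ‖u₀‖ :=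
        div_le_div₀ (by positivity) (by linarith) hu₀pos hXlow
    _ = Q * Real.sqrt ((M:ℝ) + 1) / M := by
        rw [hQdef, hdtdef]
        field_simp
    _ ≤ ε := hfinal
end
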